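/- Let k ≥ ℓ ≥ 0 be integers, let L = 2^ℓ, and let q, i be integers with L dividing q, 0 ≤ i < L, and 0 ≤ q + i < 2^k. Then rev_k(q + i) = rev_k(q) + rev_k(i). -/
import Mathlib

/-- The length-`k` bit-reversal of `s`: if `s = Σ_{i<k} b_i 2^i` with `b_i ∈ {0,1}`,
then `rev k s = Σ_{i<k} b_i 2^(k-1-i)`. -/
def rev (k s : ℕ) : ℕ := ∑ i ∈ Finset.range k, (s / 2 ^ i % 2) * 2 ^ (k - 1 - i)

theorem stmt3 (k ℓ : ℕ) (hℓk : ℓ ≤ k) (q i : ℕ)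
    (hq : 2 ^ ℓ ∣ q) (hi : i < 2 ^ ℓ) (hqi : q + i < 2 ^ k) :
    rev k (q + i) = rev k q + rev k i := by
  have key : ∀ j, (q + i) / 2 ^ j % 2 = q / 2 ^ j % 2 + i / 2 ^ j % 2 := by
    intro j
    rcases lt_or_ge j ℓ with hj | hj
    · have hdvd : 2 ^ (j + 1) ∣ q := dvd_trans (pow_dvd_pow 2 hj) hq
      obtain ⟨c, hc⟩ := hdvd
      have hq' : q = 2 ^ j * (2 * c) := by ring_nf; ring_nf at hc; linarith
      rw [hq', Nat.mul_add_div (by positivity), Nat.mul_div_cancel_left _ (by positivity)]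
      omega
    · have hij : i / 2 ^ j = 0 :=
        Nat.div_eq_of_lt (lt_of_lt_of_le hi (Nat.pow_le_pow_right (by norm_num) hj))
      have hmod : q % 2 ^ j + i < 2 ^ j := by
        have h1 : 2 ^ ℓ ∣ q % 2 ^ j := Nat.dvd_mod_iff (pow_dvd_pow 2 hj) |>.mpr hq
        have h2 : q % 2 ^ j < 2 ^ j := Nat.mod_lt _ (by positivity)
        have h3 : 2 ^ ℓ ∣ 2 ^ j := pow_dvd_pow 2 hj
        obtain ⟨a, ha⟩ := h1
        obtain ⟨b, hb⟩ := h3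
        have : a < b := by
          by_contra h
          push_neg at h
          nlinarith [Nat.pos_of_ne_zero (show (2:ℕ)^ℓ ≠ 0 by positivity)]
        have : a + 1 ≤ b := this
        nlinarith [Nat.pos_of_ne_zero (show (2:ℕ)^ℓ ≠ 0 by positivity)]
      have hadd : (q + i) / 2 ^ j = q / 2 ^ j := by
        rw [Nat.add_div (by positivity : 0 < 2 ^ j), hij]
        have : i % 2 ^ j = i := Nat.mod_eq_of_lt (lt_of_lt_of_le hi (Nat.pow_le_pow_right (by norm_num) hj))
        simp [this]
        omega
      rw [hadd, hij]; simp
  unfold rev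
  rw [← Finset.sum_add_distrib]
  apply Finset.sum_congr rfl
  intro j _
  rw [key j, add_mul]
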